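/- (Euler; coupon collector's problem with group drawings.) Let n, s, c, λ be natural numbers with 0 < s ≤ n and λ ≤ n. Let S₁, …, S_c be independent random variables, each uniformly distributed on the s-element subsets of an n-element set. Then the probability that the union S₁ ∪ ⋯ ∪ S_c has cardinality at least n − λ equals 1 − Σ_{i=1}^{n−λ} (−1)^{i−1} · C(λ+i−1, λ) · C(n, λ+i) · (C(n−λ−i, s)/C(n, s))^c, where C denotes the binomial coefficient with C(a, b) = 0 for b > a (so the sum is finite, terms with λ + i > n vanishing). -/

import Mathlib

open Finset in

lemma chmul (m lam k : ℕ) :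
    (m.choose (lam + k)) * ((lam + k).choose lam) = m.choose lam * (m - lam).choose k := by
  by_cases h : lam + k ≤ m
  · have := Nat.choose_mul (n := m) (k := lam + k) (s := lam) (Nat.le_add_right _ _)
    simpa using this
  · push_neg at h
    rw [Nat.choose_eq_zero_of_lt h, Nat.zero_mul]
    by_cases hl : lam ≤ m
    · rw [Nat.choose_eq_zero_of_lt (show m - lam < k by omega), Nat.mul_zero]
    · rw [Nat.choose_eq_zero_of_lt (by omega), Nat.zero_mul]

lemma deltaSum (m lam : ℕ) (h : lam < m) :
    ∑ k ∈ Finset.range (m - lam + 1),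
      (-1 : ℝ) ^ k * ((lam + k).choose lam) * (m.choose (lam + k)) = 0 := by
  have h1 : ∀ k ∈ Finset.range (m - lam + 1),
      (-1 : ℝ) ^ k * ((lam + k).choose lam) * (m.choose (lam + k))
        = (m.choose lam : ℝ) * ((-1 : ℝ) ^ k * ((m - lam).choose k)) := by
    intro k _
    have := chmul m lam k
    have : ((m.choose (lam + k)) * ((lam + k).choose lam) : ℝ)
        = (m.choose lam * (m - lam).choose k : ℕ) := by exact_mod_cast congrArg (Nat.cast (R := ℝ)) this
    push_cast at this
    linear_combination ((-1 : ℝ) ^ k) * this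
  rw [Finset.sum_congr rfl h1, ← Finset.mul_sum]
  have h2 : ∑ k ∈ Finset.range (m - lam + 1), (-1 : ℝ) ^ k * ((m - lam).choose k) = 0 := by
    have := Int.alternating_sum_range_choose (n := m - lam)
    have hne : m - lam ≠ 0 := by omega
    rw [if_neg hne] at this
    exact_mod_cast congrArg (Int.cast (R := ℝ)) this
  rw [h2, mul_zero]

lemma Skey (lam : ℕ) : ∀ m, lam < m →
    ∑ k ∈ Finset.range (m - lam),
      (-1 : ℝ) ^ k * ((lam + k).choose lam) * (m.choose (lam + 1 + k)) = 1 := by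
  intro m
  induction m with
  | zero => omega
  | succ m ih =>
    intro h
    by_cases hm : lam < m
    · have hrange : m + 1 - lam = (m - lam) + 1 := by omega
      rw [hrange]
      have step : ∀ k ∈ Finset.range (m - lam + 1),
          (-1 : ℝ) ^ k * ((lam + k).choose lam) * ((m+1).choose (lam + 1 + k))
            = (-1 : ℝ) ^ k * ((lam + k).choose lam) * (m.choose (lam + k))
              + (-1 : ℝ) ^ k * ((lam + k).choose lam) * (m.choose (lam + 1 + k)) := by
        intro k _
        rw [show lam + 1 + k = lam + k + 1 by omega, Nat.choose_succ_succ m (lam + k)]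
        rw [Nat.succ_eq_add_one]
        push_cast
        ring
      rw [Finset.sum_congr rfl step, Finset.sum_add_distrib, deltaSum m lam hm, Finset.sum_range_succ]
      have hz : (m.choose (lam + 1 + (m - lam)) : ℝ) = 0 := by
        rw [Nat.choose_eq_zero_of_lt (by omega)]; norm_num
      rw [hz, mul_zero, add_zero, ih hm, zero_add]
    · have hml : m = lam := by omega
      subst hml
      simp

lemma L1 (n lam m : ℕ) (hm : m ≤ n) :
    ∑ i ∈ Finset.Icc 1 (n - lam),
      (-1 : ℝ) ^ (i - 1) * ((lam + i - 1).choose lam) * (m.choose (lam + i))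
      = if lam < m then 1 else 0 := by
  rw [← Finset.Ico_add_one_right_eq_Icc, Finset.sum_Ico_eq_sum_range, Nat.add_sub_cancel]
  have hcong : ∀ k ∈ Finset.range (n - lam),
      (-1 : ℝ) ^ (1 + k - 1) * ((lam + (1 + k) - 1).choose lam) * (m.choose (lam + (1 + k)))
        = (-1 : ℝ) ^ k * ((lam + k).choose lam) * (m.choose (lam + 1 + k)) := by
    intro k _
    rw [show 1 + k - 1 = k by omega, show lam + (1 + k) - 1 = lam + k by omega,
      show lam + (1 + k) = lam + 1 + k by omega]
  rw [Finset.sum_congr rfl hcong]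
  by_cases h : lam < m
  · rw [if_pos h]
    have hsub : Finset.range (m - lam) ⊆ Finset.range (n - lam) :=
      Finset.range_subset_range.2 (by omega)
    have hzero : ∀ k ∈ Finset.range (n - lam), k ∉ Finset.range (m - lam) →
        (-1 : ℝ) ^ k * ((lam + k).choose lam) * (m.choose (lam + 1 + k)) = 0 := by
      intro k _ hk
      simp only [Finset.mem_range, not_lt] at hk
      rw [Nat.choose_eq_zero_of_lt (show m < lam + 1 + k by omega)]
      norm_num
    rw [← Finset.sum_subset hsub hzero]
    exact Skey lam m h
  · rw [if_neg h]
    apply Finset.sum_eq_zero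
    intro k _
    rw [Nat.choose_eq_zero_of_lt (show m < lam + 1 + k by omega)]
    norm_num

lemma pi_count {α : Type*} [Fintype α] [DecidableEq α] (s c : ℕ) (t : Finset α) :
    ((Finset.univ : Finset (Fin c → Finset α)).filter
      (fun f => ∀ i, (f i).card = s ∧ f i ⊆ t)).card = (t.card.choose s) ^ c := by
  have he : (Finset.univ : Finset (Fin c → Finset α)).filter
      (fun f => ∀ i, (f i).card = s ∧ f i ⊆ t)
      = Fintype.piFinset (fun _ => t.powersetCard s) := by
    ext f
    simp [Fintype.mem_piFinset, Finset.mem_powersetCard, and_comm]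
  rw [he, Fintype.card_piFinset]
  simp [Finset.card_powersetCard]

lemma stepL1 {α : Type*} [Fintype α] [DecidableEq α] (n c lam : ℕ)
    (hcard : Fintype.card α = n) (Ω : Finset (Fin c → Finset α)) :
    ∑ f ∈ Ω, (if lam < (((Finset.univ : Finset (Fin c)).biUnion f)ᶜ).card then (1:ℝ) else 0)
      = ∑ f ∈ Ω, ∑ i ∈ Finset.Icc 1 (n - lam),
          (-1 : ℝ) ^ (i - 1) * ((lam + i - 1).choose lam : ℝ)
            * ((((Finset.univ : Finset (Fin c)).biUnion f)ᶜ).card.choose (lam + i) : ℝ) := by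
  apply Finset.sum_congr rfl
  intro f hf
  have hmn : (((Finset.univ : Finset (Fin c)).biUnion f)ᶜ).card ≤ n := by
    rw [Finset.card_compl, hcard]; omega
  exact (L1 n lam ((((Finset.univ : Finset (Fin c)).biUnion f)ᶜ).card) hmn).symm

/-- Euler's formula (coupon collector's problem with group drawings):
if `c` players each independently draw a uniformly random `s`-element subset of
an `n`-element set (with `0 < s ≤ n`, `lam ≤ n`), then the probability that
their union has at least `n − lam` elements equals
`1 − Σ_{i=1}^{n−lam} (−1)^{i−1} C(lam+i−1, lam) C(n, lam+i) (C(n−lam−i, s)/C(n, s))^c`.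
The probability is expressed as the ratio of the number of favourable `c`-tuples
of `s`-element subsets to the total number of `c`-tuples of `s`-element subsets. -/
theorem stmt7 {α : Type*} [Fintype α] [DecidableEq α]
    (n s c lam : ℕ) (hcard : Fintype.card α = n)
    (hs : 0 < s) (hsn : s ≤ n) (hlam : lam ≤ n) :
    ((((Finset.univ : Finset (Fin c → Finset α)).filter
        (fun f => (∀ i, (f i).card = s) ∧
          n - lam ≤ ((Finset.univ : Finset (Fin c)).biUnion f).card)).card : ℝ) /
      (((Finset.univ : Finset (Fin c → Finset α)).filter
        (fun f => ∀ i, (f i).card = s)).card : ℝ)) =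
    1 - ∑ i ∈ Finset.Icc 1 (n - lam),
      (-1 : ℝ) ^ (i - 1) * ((lam + i - 1).choose lam : ℝ) * (n.choose (lam + i) : ℝ) *
        (((n - lam - i).choose s : ℝ) / (n.choose s : ℝ)) ^ c := by
  classical
  set Ω : Finset (Fin c → Finset α) :=
    (Finset.univ : Finset (Fin c → Finset α)).filter (fun f => ∀ i, (f i).card = s) with hΩdef
  -- total count
  have hΩcard : Ω.card = (n.choose s) ^ c := by
    have he : Ω = (Finset.univ : Finset (Fin c → Finset α)).filter
        (fun f => ∀ i, (f i).card = s ∧ f i ⊆ Finset.univ) := by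
      ext f; simp [hΩdef]
    rw [he, pi_count, Finset.card_univ, hcard]
  -- count of tuples avoiding a fixed set J
  have hsub_count : ∀ J : Finset α,
      (Ω.filter (fun f => J ⊆ ((Finset.univ : Finset (Fin c)).biUnion f)ᶜ)).card
        = ((n - J.card).choose s) ^ c := by
    intro J
    have he : Ω.filter (fun f => J ⊆ ((Finset.univ : Finset (Fin c)).biUnion f)ᶜ)
        = (Finset.univ : Finset (Fin c → Finset α)).filter
            (fun f => ∀ i, (f i).card = s ∧ f i ⊆ Jᶜ) := by
      rw [hΩdef, Finset.filter_filter]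
      ext f
      simp only [Finset.mem_filter, Finset.mem_univ, true_and]
      constructor
      · rintro ⟨h1, h2⟩ i
        refine ⟨h1 i, ?_⟩
        have hU : (Finset.univ : Finset (Fin c)).biUnion f ⊆ Jᶜ := le_compl_comm.mp h2
        exact (Finset.subset_biUnion_of_mem f (Finset.mem_univ i)).trans hU
      · intro h
        refine ⟨fun i => (h i).1, ?_⟩
        exact le_compl_comm.mp (Finset.biUnion_subset.2 fun i _ => (h i).2)
    rw [he, pi_count, Finset.card_compl, hcard]
  -- double counting
  have hdouble : ∀ j : ℕ,
      ∑ J ∈ Finset.powersetCard j (Finset.univ : Finset α),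
        ((Ω.filter (fun f => J ⊆ ((Finset.univ : Finset (Fin c)).biUnion f)ᶜ)).card)
      = ∑ f ∈ Ω, (((Finset.univ : Finset (Fin c)).biUnion f)ᶜ).card.choose j := by
    intro j
    have h1 : ∀ J ∈ Finset.powersetCard j (Finset.univ : Finset α),
        (Ω.filter (fun f => J ⊆ ((Finset.univ : Finset (Fin c)).biUnion f)ᶜ)).card
          = ∑ f ∈ Ω, (if J ⊆ ((Finset.univ : Finset (Fin c)).biUnion f)ᶜ then 1 else 0) := by
      intro J _
      rw [Finset.card_filter]
    rw [Finset.sum_congr rfl h1, Finset.sum_comm]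
    refine Finset.sum_congr rfl fun f _ => ?_
    rw [← Finset.card_filter]
    have he : (Finset.powersetCard j (Finset.univ : Finset α)).filter
        (fun J => J ⊆ ((Finset.univ : Finset (Fin c)).biUnion f)ᶜ)
        = (((Finset.univ : Finset (Fin c)).biUnion f)ᶜ).powersetCard j := by
      ext J
      simp only [Finset.mem_filter, Finset.mem_powersetCard]
      exact ⟨fun h => ⟨h.2, h.1.2⟩, fun h => ⟨⟨Finset.subset_univ J, h.2⟩, h.1⟩⟩
    rw [he, Finset.card_powersetCard]
  -- the bad set
  set B : Finset (Fin c → Finset α) :=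
    Ω.filter (fun f => lam < (((Finset.univ : Finset (Fin c)).biUnion f)ᶜ).card) with hBdef
  have hcardle : ∀ f : Fin c → Finset α,
      ((Finset.univ : Finset (Fin c)).biUnion f).card ≤ n := by
    intro f; rw [← hcard]; exact Finset.card_le_univ _
  have hcompl : ∀ f : Fin c → Finset α,
      (((Finset.univ : Finset (Fin c)).biUnion f)ᶜ).card
        = n - ((Finset.univ : Finset (Fin c)).biUnion f).card := by
    intro f; rw [Finset.card_compl, hcard]
  -- split Ω
  have hFB : ((Finset.univ : Finset (Fin c → Finset α)).filter
      (fun f => (∀ i, (f i).card = s) ∧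
        n - lam ≤ ((Finset.univ : Finset (Fin c)).biUnion f).card)).card + B.card = Ω.card := by
    rw [← Finset.filter_filter, ← hΩdef, hBdef]
    have he : Ω.filter (fun f => lam < (((Finset.univ : Finset (Fin c)).biUnion f)ᶜ).card)
        = Ω.filter (fun f => ¬ (n - lam ≤ ((Finset.univ : Finset (Fin c)).biUnion f).card)) := by
      apply Finset.filter_congr
      intro f _
      have := hcardle f
      rw [hcompl f]
      constructor
      · intro h1 h2; omega
      · intro h1; omega
    rw [he]
    exact Finset.card_filter_add_card_filter_not _
  -- key identity: B.card equals the inclusion-exclusion sum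
  have key : (B.card : ℝ) = ∑ i ∈ Finset.Icc 1 (n - lam),
      (-1 : ℝ) ^ (i - 1) * ((lam + i - 1).choose lam : ℝ) * (n.choose (lam + i) : ℝ)
        * (((n - lam - i).choose s : ℝ)) ^ c := by
    have step1 : ∀ i : ℕ, ((n.choose (lam + i) : ℝ) * (((n - lam - i).choose s : ℝ)) ^ c)
        = ∑ J ∈ Finset.powersetCard (lam + i) (Finset.univ : Finset α),
            ((Ω.filter (fun f => J ⊆ ((Finset.univ : Finset (Fin c)).biUnion f)ᶜ)).card : ℝ) := by
      intro i
      have h2 : ∀ J ∈ Finset.powersetCard (lam + i) (Finset.univ : Finset α),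
          ((Ω.filter (fun f => J ⊆ ((Finset.univ : Finset (Fin c)).biUnion f)ᶜ)).card : ℝ)
            = (((n - lam - i).choose s : ℝ)) ^ c := by
        intro J hJ
        have hJc : J.card = lam + i := (Finset.mem_powersetCard.1 hJ).2
        rw [hsub_count J, hJc, Nat.sub_sub]
        push_cast
        ring
      rw [Finset.sum_congr rfl h2, Finset.sum_const, Finset.card_powersetCard,
        Finset.card_univ, hcard, nsmul_eq_mul]
    have step2 : ∀ i : ℕ,
        (∑ J ∈ Finset.powersetCard (lam + i) (Finset.univ : Finset α),
          ((Ω.filter (fun f => J ⊆ ((Finset.univ : Finset (Fin c)).biUnion f)ᶜ)).card : ℝ))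
        = ∑ f ∈ Ω, (((((Finset.univ : Finset (Fin c)).biUnion f)ᶜ).card.choose (lam + i) : ℝ)) := by
      intro i
      have := hdouble (lam + i)
      exact_mod_cast congrArg (Nat.cast (R := ℝ)) this
    calc (B.card : ℝ)
        = ∑ f ∈ Ω, (if lam < (((Finset.univ : Finset (Fin c)).biUnion f)ᶜ).card
            then (1 : ℝ) else 0) := by
          rw [hBdef, Finset.card_filter]
          push_cast
          rfl
      _ = ∑ f ∈ Ω, ∑ i ∈ Finset.Icc 1 (n - lam),
            (-1 : ℝ) ^ (i - 1) * ((lam + i - 1).choose lam : ℝ)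
              * ((((Finset.univ : Finset (Fin c)).biUnion f)ᶜ).card.choose (lam + i) : ℝ) := by
          exact stepL1 n c lam hcard Ω

      _ = ∑ i ∈ Finset.Icc 1 (n - lam), ∑ f ∈ Ω,
            (-1 : ℝ) ^ (i - 1) * ((lam + i - 1).choose lam : ℝ)
              * ((((Finset.univ : Finset (Fin c)).biUnion f)ᶜ).card.choose (lam + i) : ℝ) := by
          rw [Finset.sum_comm]
      _ = ∑ i ∈ Finset.Icc 1 (n - lam),
            (-1 : ℝ) ^ (i - 1) * ((lam + i - 1).choose lam : ℝ)
              * ((n.choose (lam + i) : ℝ) * (((n - lam - i).choose s : ℝ)) ^ c) := by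
          refine Finset.sum_congr rfl fun i _ => ?_
          rw [← Finset.mul_sum, step1 i, step2 i]
      _ = _ := by
          refine Finset.sum_congr rfl fun i _ => ?_
          ring
  -- finish
  have hD : (0 : ℝ) < (n.choose s : ℝ) := by
    exact_mod_cast Nat.choose_pos hsn
  have hΩR : (Ω.card : ℝ) = ((n.choose s : ℝ)) ^ c := by
    rw [hΩcard]; push_cast; ring
  have hFR : (((Finset.univ : Finset (Fin c → Finset α)).filter
      (fun f => (∀ i, (f i).card = s) ∧
        n - lam ≤ ((Finset.univ : Finset (Fin c)).biUnion f).card)).card : ℝ)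
      = (Ω.card : ℝ) - (B.card : ℝ) := by
    have := hFB
    have h2 : (((Finset.univ : Finset (Fin c → Finset α)).filter
        (fun f => (∀ i, (f i).card = s) ∧
          n - lam ≤ ((Finset.univ : Finset (Fin c)).biUnion f).card)).card : ℝ)
        + (B.card : ℝ) = (Ω.card : ℝ) := by exact_mod_cast congrArg (Nat.cast (R := ℝ)) this
    linarith
  have hsum : ∑ i ∈ Finset.Icc 1 (n - lam),
      (-1 : ℝ) ^ (i - 1) * ((lam + i - 1).choose lam : ℝ) * (n.choose (lam + i) : ℝ) *
        (((n - lam - i).choose s : ℝ) / (n.choose s : ℝ)) ^ c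
      = (∑ i ∈ Finset.Icc 1 (n - lam),
        (-1 : ℝ) ^ (i - 1) * ((lam + i - 1).choose lam : ℝ) * (n.choose (lam + i) : ℝ)
          * (((n - lam - i).choose s : ℝ)) ^ c) / ((n.choose s : ℝ)) ^ c := by
    rw [Finset.sum_div]
    refine Finset.sum_congr rfl fun i _ => ?_
    rw [div_pow]
    ring
  rw [hFR, hΩR, hsum, ← key]
  have hDc : ((n.choose s : ℝ)) ^ c ≠ 0 := by positivity
  field_simp
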